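/- Let ξ > 0 be real and let b be real with 0 ≤ b ≤ (√2 − 1)·ξ. Set β = −i·b. Then min{ 2|β|, √2·|ξ − β|, √2·|ξ + β|, √2·|ξ − iβ|, √2·|ξ + iβ|, 2ξ } = 2b. -/

import Mathlib

open Real Complex

/-- The minimum pairwise Euclidean distance of the 8-point composite constellation. -/
noncomputable def Dmin (ξ : ℝ) (β : ℂ) : ℝ :=
  min (min (min (2 * ‖β‖) (Real.sqrt 2 * ‖(ξ : ℂ) - β‖))
        (min (Real.sqrt 2 * ‖(ξ : ℂ) + β‖)
          (Real.sqrt 2 * ‖(ξ : ℂ) - Complex.I * β‖)))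
      (min (Real.sqrt 2 * ‖(ξ : ℂ) + Complex.I * β‖) (2 * ξ))

theorem stmt_11 (ξ b : ℝ) (hξ : 0 < ξ) (hb : 0 ≤ b) (hb' : b ≤ (Real.sqrt 2 - 1) * ξ)
    (β : ℂ) (hβ : β = -Complex.I * (b : ℂ)) :
    Dmin ξ β = 2 * b := by
  have hs2 : Real.sqrt 2 ^ 2 = 2 := Real.sq_sqrt (by norm_num)
  have hs2pos : (0:ℝ) < Real.sqrt 2 := Real.sqrt_pos.mpr (by norm_num)
  have hbξ : b ≤ ξ := by nlinarith
  have h1 : ‖β‖ = b := by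
    rw [hβ]; simp [_root_.abs_of_nonneg hb]
  have h2 : (ξ : ℂ) - β = (ξ : ℂ) + (b : ℂ) * Complex.I := by rw [hβ]; ring
  have h3 : (ξ : ℂ) + β = (ξ : ℂ) + (-b : ℝ) * Complex.I := by rw [hβ]; push_cast; ring
  have hIβ : Complex.I * β = (b : ℂ) := by
    rw [hβ]; rw [show Complex.I * (-Complex.I * (b:ℂ)) = -(Complex.I * Complex.I) * b by ring,
      Complex.I_mul_I]; ring
  have h4 : (ξ : ℂ) - Complex.I * β = ((ξ - b : ℝ) : ℂ) := by rw [hIβ]; push_cast; ring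
  have h5 : (ξ : ℂ) + Complex.I * β = ((ξ + b : ℝ) : ℂ) := by rw [hIβ]; push_cast; ring
  have ha2 : ‖(ξ : ℂ) - β‖ = Real.sqrt (ξ ^ 2 + b ^ 2) := by
    rw [h2, Complex.norm_add_mul_I]
  have ha3 : ‖(ξ : ℂ) + β‖ = Real.sqrt (ξ ^ 2 + b ^ 2) := by
    rw [h3, Complex.norm_add_mul_I]; ring_nf
  have ha4 : ‖(ξ : ℂ) - Complex.I * β‖ = ξ - b := by
    rw [h4, Complex.norm_real, Real.norm_eq_abs, _root_.abs_of_nonneg (by linarith)]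
  have ha5 : ‖(ξ : ℂ) + Complex.I * β‖ = ξ + b := by
    rw [h5, Complex.norm_real, Real.norm_eq_abs, _root_.abs_of_nonneg (by linarith)]
  have hsq : Real.sqrt (ξ ^ 2 + b ^ 2) ^ 2 = ξ ^ 2 + b ^ 2 :=
    Real.sq_sqrt (by positivity)
  have hsqnn : (0:ℝ) ≤ Real.sqrt (ξ ^ 2 + b ^ 2) := Real.sqrt_nonneg _
  have k1 : 2 * b ≤ Real.sqrt 2 * Real.sqrt (ξ ^ 2 + b ^ 2) := by
    nlinarith [sq_nonneg (Real.sqrt 2 * Real.sqrt (ξ ^ 2 + b ^ 2) - 2 * b),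
      mul_pos hs2pos (lt_of_lt_of_le hξ ((Real.sqrt_sq hξ.le).symm.le.trans (Real.sqrt_le_sqrt (by nlinarith : (ξ:ℝ)^2 ≤ ξ^2 + b^2))))]
  have k2 : 2 * b ≤ Real.sqrt 2 * (ξ - b) := by nlinarith
  have k3 : 2 * b ≤ Real.sqrt 2 * (ξ + b) := by nlinarith
  have k4 : 2 * b ≤ 2 * ξ := by linarith
  rw [Dmin, h1, ha2, ha3, ha4, ha5]
  refine le_antisymm ((min_le_left _ _).trans ((min_le_left _ _).trans (min_le_left _ _))) ?_
  exact le_min (le_min (le_min le_rfl k1) (le_min k1 k2)) (le_min k3 k4)
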